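/- For a regular hom-Lie algebra (L, [-,-], α) (i.e., α is an R-module automorphism preserving the bracket) and any integer s, the pair (ad_s, α) with ad_s(g)(h) := [α^s(g), h] is a representation of (L, [-,-], α) on L. -/

import Mathlib

/-- for a regular (multiplicative, with `α` invertible) hom-Lie algebra
`(L, b, α)` and any integer `s`, the pair `(ad_s, α)` with `ad_s g h = b (α^s g) h`
is a representation of `(L, b, α)` on `L`, i.e. `ad_s (α x) ∘ α = α ∘ ad_s x` and
`ad_s (b x y) ∘ α = ad_s (α x) ∘ ad_s y - ad_s (α y) ∘ ad_s x`. -/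
theorem adjoint_rep_of_regular_homLie
    (R : Type*) [CommRing R] (L : Type*) [AddCommGroup L] [Module R L]
    (b : L →ₗ[R] L →ₗ[R] L) (α : L ≃ₗ[R] L)
    (hskew : ∀ x y : L, b x y = -b y x)
    (hmult : ∀ x y : L, α (b x y) = b (α x) (α y))
    (hJacobi : ∀ x y z : L,
      b (α x) (b y z) + b (α y) (b z x) + b (α z) (b x y) = 0)
    (s : ℤ) :
    (∀ x v : L, b ((α ^ s) (α x)) (α v) = α (b ((α ^ s) x) v)) ∧
    (∀ x y v : L, b ((α ^ s) (b x y)) (α v)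
        = b ((α ^ s) (α x)) (b ((α ^ s) y) v) - b ((α ^ s) (α y)) (b ((α ^ s) x) v)) := by
  have hmulap : ∀ (e f : L ≃ₗ[R] L) (x : L), (e * f) x = e (f x) := fun _ _ _ => rfl
  -- α⁻¹ also preserves the bracket
  have hinv : ∀ x y : L, α⁻¹ (b x y) = b (α⁻¹ x) (α⁻¹ y) := by
    intro x y
    apply α.injective
    rw [hmult (α⁻¹ x) (α⁻¹ y)]
    have hai : ∀ z : L, α (α⁻¹ z) = z := fun z => by
      calc α (α⁻¹ z) = (α * α⁻¹) z := rfl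
        _ = z := by rw [mul_inv_cancel]; rfl
    rw [hai, hai, hai]
  -- α^s preserves the bracket, by induction on s
  have hm : ∀ t : ℤ, ∀ x y : L, (α ^ t) (b x y) = b ((α ^ t) x) ((α ^ t) y) := by
    intro t
    induction t using Int.induction_on with
    | zero => simp
    | succ n ih =>
        intro x y
        have h : (α ^ ((n : ℤ) + 1)) = α * α ^ (n : ℤ) := by
          rw [add_comm, zpow_add, zpow_one]
        simp only [h, hmulap, ih, hmult]
    | pred n ih =>
        intro x y
        have h : (α ^ (-(n : ℤ) - 1)) = α⁻¹ * α ^ (-(n : ℤ)) := by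
          rw [sub_eq_add_neg, add_comm, zpow_add, zpow_neg_one]
        simp only [h, hmulap, ih, hinv]
  -- α^s commutes with α
  have hc : ∀ x : L, (α ^ s) (α x) = α ((α ^ s) x) := by
    intro x
    have h : α ^ s * α = α * α ^ s := by
      rw [← zpow_add_one, ← zpow_one_add, add_comm]
    calc (α ^ s) (α x) = (α ^ s * α) x := rfl
      _ = (α * α ^ s) x := by rw [h]
      _ = α ((α ^ s) x) := rfl
  constructor
  · intro x v
    rw [hc, ← hmult]
  · intro x y v
    rw [hm s x y]
    set X := (α ^ s) x
    set Y := (α ^ s) y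
    have hJ := hJacobi X Y v
    rw [hskew v X, hskew (α v) (b X Y)] at hJ
    simp only [map_neg, LinearMap.neg_apply] at hJ
    rw [hc x, hc y]
    have h3 : b (α X) (b Y v) - b (α Y) (b X v) - b (b X Y) (α v) = 0 := by
      rw [← hJ]; abel
    exact (sub_eq_zero.mp h3).symm
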